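/- arXiv:1306.2430 — 5 statements merged into one kernel-verified Lean document; each statement's English description precedes it below -/
import Mathlib

section
/- Let (Ω, 𝓕, P) be a probability space, d ≥ 1, and let F, G : Ω → ℝ^d be random vectors whose coordinates are all integrable. Assume that the random vectors G and F − G are independent, and that E[F_i] = E[G_i] for every i = 1, …, d. Then E[max_{1≤i≤d} F_i] ≥ E[max_{1≤i≤d} G_i]. -/
open MeasureTheory ProbabilityTheory

lemma abs_sup'_le {ι : Type*} (s : Finset ι) (hs : s.Nonempty) (f : ι → ℝ) :
    |s.sup' hs f| ≤ ∑ i ∈ s, |f i| := by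
  obtain ⟨i0, hi0⟩ := hs
  rw [abs_le]
  refine ⟨?_, ?_⟩
  · calc -(∑ i ∈ s, |f i|) ≤ -|f i0| := by
          exact neg_le_neg (Finset.single_le_sum (f := fun i => |f i|) (fun i _ => abs_nonneg _) hi0)
      _ ≤ f i0 := neg_abs_le _
      _ ≤ s.sup' _ f := Finset.le_sup' f hi0
  · exact Finset.sup'_le _ _ fun i hi =>
      le_trans (le_abs_self _) (Finset.single_le_sum (fun j _ => abs_nonneg (f j)) hi)

/-- Proposition 1.3 (sad-prop): if `G` and `F - G` are independent random vectors in `ℝ^d`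
with integrable coordinates and `E[Fᵢ] = E[Gᵢ]` for every `i`, then
`E[max_i Fᵢ] ≥ E[max_i Gᵢ]`. -/
theorem sad_prop {Ω : Type*} [MeasurableSpace Ω] (P : Measure Ω) [IsProbabilityMeasure P]
    (d : ℕ) (hd : 0 < d) (F G : Ω → Fin d → ℝ)
    (hFm : Measurable F) (hGm : Measurable G)
    (hFi : ∀ i, Integrable (fun ω => F ω i) P)
    (hGi : ∀ i, Integrable (fun ω => G ω i) P)
    (hindep : IndepFun G (fun ω => F ω - G ω) P)
    (hmean : ∀ i, ∫ ω, F ω i ∂P = ∫ ω, G ω i ∂P) :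
    ∫ ω, Finset.univ.sup' ⟨⟨0, hd⟩, Finset.mem_univ _⟩ (fun i => F ω i) ∂P
      ≥ ∫ ω, Finset.univ.sup' ⟨⟨0, hd⟩, Finset.mem_univ _⟩ (fun i => G ω i) ∂P := by
  have ne : (Finset.univ : Finset (Fin d)).Nonempty := ⟨⟨0, hd⟩, Finset.mem_univ _⟩
  set H : Ω → Fin d → ℝ := fun ω => F ω - G ω with hHdef
  have hHm : Measurable H := hFm.sub hGm
  have hHi : ∀ i, Integrable (fun ω => H ω i) P := fun i => (hFi i).sub (hGi i)
  set M : (Fin d → ℝ) → ℝ := fun x => Finset.univ.sup' ne (fun i => x i) with hMdef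
  have hMm : Measurable M := by
    have : ∀ i : Fin d, Measurable (fun x : Fin d → ℝ => x i) := fun i => measurable_pi_apply i
    have h := Finset.measurable_sup' ne (fun i _ => this i)
    convert h using 1
    ext x
    simp [Finset.sup'_apply]
    rfl
  -- bound: |M x| ≤ ∑ |x i|
  have hMbd : ∀ x : Fin d → ℝ, |M x| ≤ ∑ i, |x i| := fun x => abs_sup'_le _ ne _
  -- integrability of M ∘ f for random vectors with integrable coordinates
  have hMint : ∀ (f : Ω → Fin d → ℝ), Measurable f → (∀ i, Integrable (fun ω => f ω i) P) →
      Integrable (fun ω => M (f ω)) P := by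
    intro f hfm hfi
    refine Integrable.mono' (integrable_finset_sum Finset.univ fun i _ => (hfi i).abs)
      (hMm.comp hfm).aestronglyMeasurable ?_
    filter_upwards with ω
    simpa [Real.norm_eq_abs] using hMbd (f ω)
  set μ := P.map G with hμdef
  set ν := P.map H with hνdef
  have : IsProbabilityMeasure μ := Measure.isProbabilityMeasure_map hGm.aemeasurable
  have : IsProbabilityMeasure ν := Measure.isProbabilityMeasure_map hHm.aemeasurable
  have hprod : P.map (fun ω => (G ω, H ω)) = μ.prod ν :=
    (indepFun_iff_map_prod_eq_prod_map_map hGm.aemeasurable hHm.aemeasurable).mp hindep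
  have hFGH : ∀ ω, F ω = G ω + H ω := by intro ω; simp [hHdef]
  -- measurability of the sum map
  have hsm : Measurable (fun p : (Fin d → ℝ) × (Fin d → ℝ) => M (p.1 + p.2)) :=
    hMm.comp (measurable_fst.add measurable_snd)
  -- rewrite ∫ M(F) as integral over the product measure
  have key1 : ∫ ω, M (F ω) ∂P = ∫ p : (Fin d → ℝ) × (Fin d → ℝ), M (p.1 + p.2) ∂(μ.prod ν) := by
    rw [← hprod, integral_map (hGm.prodMk hHm).aemeasurable hsm.aestronglyMeasurable]
    simp only [← hFGH]
  -- integrability on the product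
  have hIntF : Integrable (fun ω => M (F ω)) P := hMint F hFm hFi
  have hInt : Integrable (fun p : (Fin d → ℝ) × (Fin d → ℝ) => M (p.1 + p.2)) (μ.prod ν) := by
    rw [← hprod]
    rw [integrable_map_measure hsm.aestronglyMeasurable (hGm.prodMk hHm).aemeasurable]
    simpa only [Function.comp_def, ← hFGH] using hIntF
  -- Fubini
  have key2 : ∫ p : (Fin d → ℝ) × (Fin d → ℝ), M (p.1 + p.2) ∂(μ.prod ν)
      = ∫ g, ∫ h, M (g + h) ∂ν ∂μ := integral_prod _ hInt
  -- coordinate integrals of ν vanish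
  have hνi : ∀ i : Fin d, Integrable (fun h : Fin d → ℝ => h i) ν := by
    intro i
    rw [hνdef, integrable_map_measure (measurable_pi_apply i).aestronglyMeasurable
      hHm.aemeasurable]
    exact hHi i
  have hν0 : ∀ i : Fin d, ∫ h : Fin d → ℝ, h i ∂ν = 0 := by
    intro i
    rw [hνdef, integral_map hHm.aemeasurable (measurable_pi_apply i).aestronglyMeasurable]
    have : ∫ ω, H ω i ∂P = ∫ ω, F ω i ∂P - ∫ ω, G ω i ∂P := by
      simp only [hHdef, Pi.sub_apply]
      exact integral_sub (hFi i) (hGi i)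
    rw [this, hmean i, sub_self]
  -- the pointwise (in g) inequality, a.e.
  have key3 : ∫ g, M g ∂μ ≤ ∫ g, ∫ h, M (g + h) ∂ν ∂μ := by
    have hIntG : Integrable (fun g : Fin d → ℝ => M g) μ := by
      rw [hμdef, integrable_map_measure hMm.aestronglyMeasurable hGm.aemeasurable]
      exact hMint G hGm hGi
    refine integral_mono_ae hIntG hInt.integral_prod_left ?_
    filter_upwards [hInt.prod_right_ae] with g hg
    have : M g = Finset.univ.sup' ne (fun i => g i) := rfl
    rw [this]
    refine Finset.sup'_le _ _ fun i _ => ?_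
    have h1 : g i = ∫ h : Fin d → ℝ, (g i + h i) ∂ν := by
      rw [integral_add (integrable_const _) (hνi i), integral_const, hν0 i]
      simp
    rw [h1]
    refine integral_mono ((integrable_const _).add (hνi i)) hg fun h => ?_
    exact Finset.le_sup' (fun j => (g + h) j) (Finset.mem_univ i)
  -- ∫ M g dμ = ∫ M (G ω) dP
  have key4 : ∫ g, M g ∂μ = ∫ ω, M (G ω) ∂P := by
    rw [hμdef, integral_map hGm.aemeasurable hMm.aestronglyMeasurable]
  calc ∫ ω, Finset.univ.sup' ⟨⟨0, hd⟩, Finset.mem_univ _⟩ (fun i => G ω i) ∂P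
      = ∫ g, M g ∂μ := key4.symm
    _ ≤ ∫ g, ∫ h, M (g + h) ∂ν ∂μ := key3
    _ = ∫ ω, M (F ω) ∂P := (key1.trans key2).symm
    _ = _ := rfl
end

section
/- Let F, G : Ω → ℝ^d be integrable centered random vectors on a probability space (Ω, 𝓕, P), and let (Γ^F, Γ^G) be a joint Stein pair without cross terms for (F, G). Let f : ℝ^d → ℝ be a C² function with bounded first and second partial derivatives. Assume that almost surely, for every x ∈ ℝ^d, Σ_{i,j=1}^d (Γ^F_{ij} − Γ^G_{ij}) (∂²f/∂x_i∂x_j)(x) ≥ 0. Then E[f(F)] ≥ E[f(G)]. -/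
open MeasureTheory ProbabilityTheory

variable {d : ℕ}

noncomputable def interpCLM (d : ℕ) (a b : ℝ) :
    ((Fin d → ℝ) × (Fin d → ℝ)) →L[ℝ] (Fin d → ℝ) :=
  a • ContinuousLinearMap.fst ℝ _ _ + b • ContinuousLinearMap.snd ℝ _ _

@[simp] lemma interpCLM_apply (a b : ℝ) (p : (Fin d → ℝ) × (Fin d → ℝ)) :
    interpCLM d a b p = a • p.1 + b • p.2 := rfl

lemma norm_interpCLM_apply_le (a b : ℝ) (p : (Fin d → ℝ) × (Fin d → ℝ)) :
    ‖interpCLM d a b p‖ ≤ (|a| + |b|) * ‖p‖ := by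
  rw [interpCLM_apply]
  calc ‖a • p.1 + b • p.2‖ ≤ ‖a • p.1‖ + ‖b • p.2‖ := norm_add_le _ _
  _ ≤ |a| * ‖p‖ + |b| * ‖p‖ := by
      gcongr
      · simpa [norm_smul] using mul_le_mul_of_nonneg_left (norm_fst_le p) (abs_nonneg a)
      · simpa [norm_smul] using mul_le_mul_of_nonneg_left (norm_snd_le p) (abs_nonneg b)
  _ = (|a| + |b|) * ‖p‖ := by ring

-- second derivative bound
lemma norm_fderiv_fderiv_eq (f : (Fin d → ℝ) → ℝ) (z : Fin d → ℝ) :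
    ‖fderiv ℝ (fderiv ℝ f) z‖ = ‖iteratedFDeriv ℝ 2 f z‖ := by
  rw [← norm_iteratedFDeriv_fderiv (n := 1)]
  rw [← norm_iteratedFDeriv_fderiv (n := 0), norm_iteratedFDeriv_zero]

section steinTest
variable (f : (Fin d → ℝ) → ℝ) (a b : ℝ) (v : Fin d → ℝ)

lemma steinTest_hasFDerivAt (hf : ContDiff ℝ 2 f) (q : (Fin d → ℝ) × (Fin d → ℝ)) :
    HasFDerivAt (fun p : (Fin d → ℝ) × (Fin d → ℝ) => fderiv ℝ f (a • p.1 + b • p.2) v)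
      ((ContinuousLinearMap.apply ℝ ℝ v).comp
        ((fderiv ℝ (fderiv ℝ f) (a • q.1 + b • q.2)).comp (interpCLM d a b))) q := by
  have hg : ContDiff ℝ 1 (fderiv ℝ f) := hf.fderiv_right (by norm_num)
  have h1 : HasFDerivAt (interpCLM d a b) (interpCLM d a b) q :=
    (interpCLM d a b).hasFDerivAt
  have h2 : HasFDerivAt (fderiv ℝ f) (fderiv ℝ (fderiv ℝ f) (a • q.1 + b • q.2))
      (interpCLM d a b q) := by
    simpa using (hg.differentiable one_ne_zero (interpCLM d a b q)).hasFDerivAt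
  have h3 := ((ContinuousLinearMap.apply ℝ ℝ v).hasFDerivAt.comp q          (h2.comp q h1))
  exact h3

lemma steinTest_contDiff (hf : ContDiff ℝ 2 f) :
    ContDiff ℝ 1 (fun p : (Fin d → ℝ) × (Fin d → ℝ) => fderiv ℝ f (a • p.1 + b • p.2) v) := by
  have hg : ContDiff ℝ 1 (fderiv ℝ f) := hf.fderiv_right (by norm_num)
  have : ContDiff ℝ 1 (fun p : (Fin d → ℝ) × (Fin d → ℝ) => interpCLM d a b p) :=
    (interpCLM d a b).contDiff
  exact (ContinuousLinearMap.apply ℝ ℝ v).contDiff.comp (hg.comp this)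

end steinTest

lemma steinTest_fderiv_eq (f : (Fin d → ℝ) → ℝ) (a b : ℝ) (v : Fin d → ℝ) (hf : ContDiff ℝ 2 f)
    (q : (Fin d → ℝ) × (Fin d → ℝ)) :
    fderiv ℝ (fun p : (Fin d → ℝ) × (Fin d → ℝ) => fderiv ℝ f (a • p.1 + b • p.2) v) q
      = (ContinuousLinearMap.apply ℝ ℝ v).comp
        ((fderiv ℝ (fderiv ℝ f) (a • q.1 + b • q.2)).comp (interpCLM d a b)) :=
  (steinTest_hasFDerivAt f a b v hf q).fderiv

lemma steinTest_fderiv_apply (f : (Fin d → ℝ) → ℝ) (a b : ℝ) (v : Fin d → ℝ)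
    (hf : ContDiff ℝ 2 f) (q : (Fin d → ℝ) × (Fin d → ℝ)) (w : (Fin d → ℝ) × (Fin d → ℝ)) :
    fderiv ℝ (fun p : (Fin d → ℝ) × (Fin d → ℝ) => fderiv ℝ f (a • p.1 + b • p.2) v) q w
      = fderiv ℝ (fderiv ℝ f) (a • q.1 + b • q.2) (a • w.1 + b • w.2) v := by
  rw [steinTest_fderiv_eq f a b v hf q]; rfl

lemma steinTest_fderiv_fst (f : (Fin d → ℝ) → ℝ) (a b : ℝ) (i j : Fin d)
    (hf : ContDiff ℝ 2 f) (q : (Fin d → ℝ) × (Fin d → ℝ)) :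
    fderiv ℝ (fun p : (Fin d → ℝ) × (Fin d → ℝ) => fderiv ℝ f (a • p.1 + b • p.2) (Pi.single i 1))
        q ((Pi.single j 1 : Fin d → ℝ), 0)
      = a * iteratedFDeriv ℝ 2 f (a • q.1 + b • q.2) ![Pi.single j 1, Pi.single i 1] := by
  rw [steinTest_fderiv_apply f a b _ hf, iteratedFDeriv_two_apply]
  simp

lemma steinTest_fderiv_snd (f : (Fin d → ℝ) → ℝ) (a b : ℝ) (i j : Fin d)
    (hf : ContDiff ℝ 2 f) (q : (Fin d → ℝ) × (Fin d → ℝ)) :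
    fderiv ℝ (fun p : (Fin d → ℝ) × (Fin d → ℝ) => fderiv ℝ f (a • p.1 + b • p.2) (Pi.single i 1))
        q (0, (Pi.single j 1 : Fin d → ℝ))
      = b * iteratedFDeriv ℝ 2 f (a • q.1 + b • q.2) ![Pi.single j 1, Pi.single i 1] := by
  rw [steinTest_fderiv_apply f a b _ hf, iteratedFDeriv_two_apply]
  simp

lemma steinTest_fderiv_norm_le (f : (Fin d → ℝ) → ℝ) (a b : ℝ) (v : Fin d → ℝ)
    (hf : ContDiff ℝ 2 f) (M2 : ℝ) (hM2 : ∀ x, ‖iteratedFDeriv ℝ 2 f x‖ ≤ M2)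
    (q : (Fin d → ℝ) × (Fin d → ℝ)) :
    ‖fderiv ℝ (fun p : (Fin d → ℝ) × (Fin d → ℝ) => fderiv ℝ f (a • p.1 + b • p.2) v) q‖
      ≤ M2 * ‖v‖ * (|a| + |b|) := by
  have hM2' : 0 ≤ M2 := le_trans (norm_nonneg _) (hM2 0)
  rw [steinTest_fderiv_eq f a b v hf q]
  refine ContinuousLinearMap.opNorm_le_bound _ ?_ (fun w => ?_)
  · positivity
  · calc ‖fderiv ℝ (fderiv ℝ f) (a • q.1 + b • q.2) (a • w.1 + b • w.2) v‖
        ≤ ‖fderiv ℝ (fderiv ℝ f) (a • q.1 + b • q.2) (a • w.1 + b • w.2)‖ * ‖v‖ :=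
          ContinuousLinearMap.le_opNorm _ _
    _ ≤ (‖fderiv ℝ (fderiv ℝ f) (a • q.1 + b • q.2)‖ * ‖(a • w.1 + b • w.2 : Fin d → ℝ)‖) * ‖v‖ := by
        gcongr; exact ContinuousLinearMap.le_opNorm _ _
    _ ≤ (M2 * ((|a| + |b|) * ‖w‖)) * ‖v‖ := by
        have h1 : ‖fderiv ℝ (fderiv ℝ f) (a • q.1 + b • q.2)‖ ≤ M2 := by
          rw [norm_fderiv_fderiv_eq]; exact hM2 _
        have h2 : ‖(a • w.1 + b • w.2 : Fin d → ℝ)‖ ≤ (|a| + |b|) * ‖w‖ := by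
          simpa using norm_interpCLM_apply_le a b w
        gcongr
    _ = M2 * ‖v‖ * (|a| + |b|) * ‖w‖ := by ring

lemma clm_apply_pi_sum (T : (Fin d → ℝ) →L[ℝ] ℝ) (w : Fin d → ℝ) :
    T w = ∑ i, w i * T (Pi.single i 1) := by
  have hw : w = ∑ i, w i • (Pi.single i 1 : Fin d → ℝ) := by
    ext j
    simp [Finset.sum_apply, Pi.single_apply]
  conv_lhs => rw [hw]
  rw [map_sum]
  simp [smul_eq_mul]

lemma integrable_norm_pi {Ω : Type*} [MeasurableSpace Ω] {P : Measure Ω}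
    (F : Ω → Fin d → ℝ) (hFm : Measurable F) (hFi : ∀ i, Integrable (fun ω => F ω i) P) :
    Integrable (fun ω => ‖F ω‖) P := by
  have hmeas : AEStronglyMeasurable (fun ω => ‖F ω‖) P :=
    hFm.norm.aestronglyMeasurable
  refine Integrable.mono ((integrable_finset_sum Finset.univ
    (fun i _ => (hFi i).norm))) hmeas ?_
  filter_upwards with ω
  simp only [norm_norm]
  calc ‖F ω‖ ≤ ∑ i, ‖F ω i‖ := by
        refine (pi_norm_le_iff_of_nonneg (by positivity)).2 (fun i => ?_)
        exact Finset.single_le_sum (fun j _ => norm_nonneg (F ω j)) (Finset.mem_univ i)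
  _ ≤ ‖∑ i, ‖F ω i‖‖ := le_abs_self _


/-- `(ΓF, ΓG)` is a joint Stein pair without cross terms for `(F, G)`: for every `C¹` test
function `h : ℝ^d × ℝ^d → ℝ` that is bounded with bounded derivative, the integration-by-parts
identities `E[h(F,G) Fᵢ] = ∑ⱼ E[(∂h/∂xⱼ)(F,G) ΓFⱼᵢ]` and
`E[h(F,G) Gᵢ] = ∑ⱼ E[(∂h/∂yⱼ)(F,G) ΓGⱼᵢ]` hold, and the matrix entries are integrable. -/
def IsJointSteinPair {Ω : Type*} [MeasurableSpace Ω] (P : Measure Ω) {d : ℕ}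
    (F G : Ω → Fin d → ℝ) (ΓF ΓG : Ω → Fin d → Fin d → ℝ) : Prop :=
  (∀ i j, Integrable (fun ω => ΓF ω i j) P) ∧
  (∀ i j, Integrable (fun ω => ΓG ω i j) P) ∧
    ∀ h : (Fin d → ℝ) × (Fin d → ℝ) → ℝ, ContDiff ℝ 1 h → (∃ M, ∀ z, |h z| ≤ M) →
      (∃ M, ∀ z, ‖fderiv ℝ h z‖ ≤ M) →
      ∀ i,
        (∫ ω, h (F ω, G ω) * F ω i ∂P
            = ∑ j, ∫ ω, fderiv ℝ h (F ω, G ω) (Pi.single j 1, 0) * ΓF ω j i ∂P) ∧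
        (∫ ω, h (F ω, G ω) * G ω i ∂P
            = ∑ j, ∫ ω, fderiv ℝ h (F ω, G ω) (0, Pi.single j 1) * ΓG ω j i ∂P)

/-- Theorem 3.1 (gs-thm), Slepian-type inequality on Wiener space: if `(ΓF, ΓG)` is a joint
Stein pair without cross terms for the centered integrable vectors `(F, G)`, `f : ℝ^d → ℝ` is
`C²` with bounded first and second derivatives, and a.s.
`∑ᵢⱼ (ΓFᵢⱼ - ΓGᵢⱼ) (∂²f/∂xᵢ∂xⱼ)(x) ≥ 0` for every `x`, then `E[f(F)] ≥ E[f(G)]`. -/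
theorem gs_thm {Ω : Type*} [MeasurableSpace Ω] (P : Measure Ω) [IsProbabilityMeasure P]
    (d : ℕ) (F G : Ω → Fin d → ℝ)
    (hFm : Measurable F) (hGm : Measurable G)
    (hFi : ∀ i, Integrable (fun ω => F ω i) P)
    (hGi : ∀ i, Integrable (fun ω => G ω i) P)
    (hFc : ∀ i, ∫ ω, F ω i ∂P = 0) (hGc : ∀ i, ∫ ω, G ω i ∂P = 0)
    (ΓF ΓG : Ω → Fin d → Fin d → ℝ)
    (hstein : IsJointSteinPair P F G ΓF ΓG)
    (f : (Fin d → ℝ) → ℝ) (hf : ContDiff ℝ 2 f)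
    (hf1 : ∃ M, ∀ x, ‖fderiv ℝ f x‖ ≤ M)
    (hf2 : ∃ M, ∀ x, ‖iteratedFDeriv ℝ 2 f x‖ ≤ M)
    (hcond : ∀ᵐ ω ∂P, ∀ x : Fin d → ℝ,
      0 ≤ ∑ i, ∑ j, (ΓF ω i j - ΓG ω i j)
            * iteratedFDeriv ℝ 2 f x ![Pi.single i 1, Pi.single j 1]) :
    ∫ ω, f (F ω) ∂P ≥ ∫ ω, f (G ω) ∂P := by

  classical
  obtain ⟨hΓFi, hΓGi, hstein3⟩ := hstein
  obtain ⟨M1, hM1⟩ := hf1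
  obtain ⟨M2, hM2⟩ := hf2
  have hM1' : 0 ≤ M1 := le_trans (norm_nonneg _) (hM1 0)
  have hM2' : 0 ≤ M2 := le_trans (norm_nonneg _) (hM2 0)
  have hfd : Differentiable ℝ f := hf.differentiable (by norm_num)
  have hfc : Continuous (fderiv ℝ f) := hf.continuous_fderiv (by norm_num)
  set e : Fin d → (Fin d → ℝ) := fun i => Pi.single i 1 with he
  have henorm : ∀ i, ‖e i‖ ≤ 1 := by
    intro i
    refine (pi_norm_le_iff_of_nonneg one_pos.le).2 (fun j => ?_)
    simp only [he, Pi.single_apply, Real.norm_eq_abs]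
    split_ifs <;> simp
  set Z : ℝ → Ω → Fin d → ℝ := fun t ω => Real.sin t • F ω + Real.cos t • G ω with hZdef
  have hZm : ∀ t, Measurable (Z t) := by
    intro t
    have : Measurable (fun ω => Real.sin t • F ω + Real.cos t • G ω) :=
      ((measurable_const_smul (Real.sin t)).comp hFm).add
        ((measurable_const_smul (Real.cos t)).comp hGm)
    exact this
  set ψ : ℝ → Ω → ℝ :=
    fun t ω => fderiv ℝ f (Z t ω) (Real.cos t • F ω - Real.sin t • G ω) with hψdef
  -- pointwise derivative in t
  have hψd : ∀ t ω, HasDerivAt (fun s => f (Z s ω)) (ψ t ω) t := by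
    intro t ω
    have h1 : HasDerivAt (fun s => Z s ω) (Real.cos t • F ω - Real.sin t • G ω) t := by
      have := ((Real.hasDerivAt_sin t).smul_const (F ω)).add
        ((Real.hasDerivAt_cos t).smul_const (G ω))
      exact this.congr_deriv (by simp [sub_eq_add_neg, neg_smul])
    exact (hfd (Z t ω)).hasFDerivAt.comp_hasDerivAt t h1
  -- bound
  set bnd : Ω → ℝ := fun ω => M1 * (‖F ω‖ + ‖G ω‖) with hbnddef
  have hbnd_int : Integrable bnd P :=
    ((integrable_norm_pi F hFm hFi).add (integrable_norm_pi G hGm hGi)).const_mul M1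
  have hZb : ∀ (a b : ℝ), |a| ≤ 1 → |b| ≤ 1 → ∀ ω : Ω,
      ‖a • F ω + b • G ω‖ ≤ ‖F ω‖ + ‖G ω‖ := by
    intro a b ha hb ω
    calc ‖a • F ω + b • G ω‖ ≤ ‖a • F ω‖ + ‖b • G ω‖ := norm_add_le _ _
    _ = |a| * ‖F ω‖ + |b| * ‖G ω‖ := by rw [norm_smul, norm_smul]; rfl
    _ ≤ 1 * ‖F ω‖ + 1 * ‖G ω‖ := by gcongr
    _ = ‖F ω‖ + ‖G ω‖ := by ring
  have hψb : ∀ t ω, ‖ψ t ω‖ ≤ bnd ω := by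
    intro t ω
    calc ‖ψ t ω‖ ≤ ‖fderiv ℝ f (Z t ω)‖ * ‖Real.cos t • F ω - Real.sin t • G ω‖ :=
          ContinuousLinearMap.le_opNorm _ _
    _ ≤ M1 * (‖F ω‖ + ‖G ω‖) := by
        refine mul_le_mul (hM1 _) ?_ (norm_nonneg _) hM1'
        have := hZb (Real.cos t) (-Real.sin t) (Real.abs_cos_le_one t)
          (by simpa using Real.abs_sin_le_one t) ω
        simpa [sub_eq_add_neg, neg_smul] using this
    _ = bnd ω := rfl
  -- measurability
  have hψm : ∀ t, AEStronglyMeasurable (ψ t) P := by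
    intro t
    have hc : Continuous (fun p : (Fin d → ℝ) × (Fin d → ℝ) => fderiv ℝ f p.1 p.2) :=
      isBoundedBilinearMap_apply.continuous.comp (hfc.prodMap continuous_id)
    have hm : Measurable (fun ω => (Z t ω, Real.cos t • F ω - Real.sin t • G ω)) :=
      (hZm t).prodMk (((measurable_const_smul (Real.cos t)).comp hFm).sub
        ((measurable_const_smul (Real.sin t)).comp hGm))
    exact (hc.measurable.comp hm).aestronglyMeasurable
  have hfZ_int : ∀ t, Integrable (fun ω => f (Z t ω)) P := by
    intro t
    have hmeas : AEStronglyMeasurable (fun ω => f (Z t ω)) P :=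
      (hf.continuous.measurable.comp (hZm t)).aestronglyMeasurable
    refine Integrable.mono ((integrable_const |f 0|).add hbnd_int) hmeas (ae_of_all _ fun ω => ?_)
    have hmv : ‖f (Z t ω) - f 0‖ ≤ M1 * ‖Z t ω - 0‖ :=
      Convex.norm_image_sub_le_of_norm_fderiv_le (fun x _ => hfd x)
        (fun x _ => hM1 x) convex_univ (Set.mem_univ 0) (Set.mem_univ (Z t ω))
    have hZn : ‖Z t ω‖ ≤ ‖F ω‖ + ‖G ω‖ :=
      hZb _ _ (Real.abs_sin_le_one t) (Real.abs_cos_le_one t) ω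
    calc ‖f (Z t ω)‖ ≤ ‖f (Z t ω) - f 0‖ + ‖f 0‖ := by
          simpa using norm_add_le (f (Z t ω) - f 0) (f 0)
    _ ≤ M1 * (‖F ω‖ + ‖G ω‖) + |f 0| := by
        rw [sub_zero] at hmv
        have : ‖f (Z t ω) - f 0‖ ≤ M1 * (‖F ω‖ + ‖G ω‖) := hmv.trans (by gcongr)
        simp only [Real.norm_eq_abs] at this ⊢
        gcongr
    _ = |f 0| + bnd ω := by rw [hbnddef]; ring
    _ ≤ ‖|f 0| + bnd ω‖ := le_abs_self _
  -- derivative under integral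
  have hkey : ∀ t, HasDerivAt (fun s => ∫ ω, f (Z s ω) ∂P) (∫ ω, ψ t ω ∂P) t := by
    intro t₀
    exact (hasDerivAt_integral_of_dominated_loc_of_deriv_le (Metric.ball_mem_nhds t₀ one_pos)
      (Filter.Eventually.of_forall fun t => (hfZ_int t).aestronglyMeasurable)
      (hfZ_int t₀) (hψm t₀)
      (ae_of_all _ fun ω t _ => hψb t ω) hbnd_int
      (ae_of_all _ fun ω t _ => hψd t ω)).2
  -- measurability and boundedness of first-derivative terms
  have hg_meas : ∀ t i, AEStronglyMeasurable (fun ω => fderiv ℝ f (Z t ω) (e i)) P := by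
    intro t i
    exact (((ContinuousLinearMap.apply ℝ ℝ (e i)).continuous.comp hfc).measurable.comp
      (hZm t)).aestronglyMeasurable
  have hg_bdd : ∀ t i ω, ‖fderiv ℝ f (Z t ω) (e i)‖ ≤ M1 := by
    intro t i ω
    calc ‖fderiv ℝ f (Z t ω) (e i)‖ ≤ ‖fderiv ℝ f (Z t ω)‖ * ‖e i‖ :=
          ContinuousLinearMap.le_opNorm _ _
    _ ≤ M1 * 1 := mul_le_mul (hM1 _) (henorm i) (norm_nonneg _) hM1'
    _ = M1 := mul_one _
  have hFint : ∀ t i, Integrable (fun ω => fderiv ℝ f (Z t ω) (e i) * F ω i) P :=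
    fun t i => (hFi i).bdd_mul (hg_meas t i) (ae_of_all _ fun ω => hg_bdd t i ω)
  have hGint : ∀ t i, Integrable (fun ω => fderiv ℝ f (Z t ω) (e i) * G ω i) P :=
    fun t i => (hGi i).bdd_mul (hg_meas t i) (ae_of_all _ fun ω => hg_bdd t i ω)
  -- split the integral of ψ
  have hsplit : ∀ t, ∫ ω, ψ t ω ∂P
      = ∑ i, (Real.cos t * ∫ ω, fderiv ℝ f (Z t ω) (e i) * F ω i ∂P
          - Real.sin t * ∫ ω, fderiv ℝ f (Z t ω) (e i) * G ω i ∂P) := by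
    intro t
    have hfuneq : ∀ i, (fun ω => (Real.cos t * F ω i - Real.sin t * G ω i)
        * fderiv ℝ f (Z t ω) (e i))
        = fun ω => Real.cos t * (fderiv ℝ f (Z t ω) (e i) * F ω i)
          - Real.sin t * (fderiv ℝ f (Z t ω) (e i) * G ω i) := by
      intro i; funext ω; ring
    have hterm : ∀ i, Integrable (fun ω => (Real.cos t * F ω i - Real.sin t * G ω i)
        * fderiv ℝ f (Z t ω) (e i)) P := by
      intro i
      rw [hfuneq i]
      exact ((hFint t i).const_mul (Real.cos t)).sub ((hGint t i).const_mul (Real.sin t))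
    have hexp : ∀ ω, ψ t ω = ∑ i, (Real.cos t * F ω i - Real.sin t * G ω i)
        * fderiv ℝ f (Z t ω) (e i) := by
      intro ω
      have := clm_apply_pi_sum (fderiv ℝ f (Z t ω)) (Real.cos t • F ω - Real.sin t • G ω)
      simpa [hψdef, Pi.sub_apply, Pi.smul_apply, smul_eq_mul] using this
    calc ∫ ω, ψ t ω ∂P = ∫ ω, ∑ i, (Real.cos t * F ω i - Real.sin t * G ω i)
          * fderiv ℝ f (Z t ω) (e i) ∂P := by
          exact integral_congr_ae (ae_of_all _ hexp)
    _ = ∑ i, ∫ ω, (Real.cos t * F ω i - Real.sin t * G ω i)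
          * fderiv ℝ f (Z t ω) (e i) ∂P :=
          integral_finset_sum _ (fun i _ => hterm i)
    _ = ∑ i, (Real.cos t * ∫ ω, fderiv ℝ f (Z t ω) (e i) * F ω i ∂P
          - Real.sin t * ∫ ω, fderiv ℝ f (Z t ω) (e i) * G ω i ∂P) := by
          refine Finset.sum_congr rfl (fun i _ => ?_)
          rw [hfuneq i, integral_sub ((hFint t i).const_mul _) ((hGint t i).const_mul _),
            integral_const_mul, integral_const_mul]
  -- apply the Stein identities
  have hsteinF : ∀ t i, (∫ ω, fderiv ℝ f (Z t ω) (e i) * F ω i ∂P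
        = Real.sin t * ∑ j, ∫ ω, iteratedFDeriv ℝ 2 f (Z t ω) ![e j, e i] * ΓF ω j i ∂P)
      ∧ (∫ ω, fderiv ℝ f (Z t ω) (e i) * G ω i ∂P
        = Real.cos t * ∑ j, ∫ ω, iteratedFDeriv ℝ 2 f (Z t ω) ![e j, e i] * ΓG ω j i ∂P) := by
    intro t i
    set a := Real.sin t with ha
    set b := Real.cos t with hb
    set h : (Fin d → ℝ) × (Fin d → ℝ) → ℝ :=
      fun p => fderiv ℝ f (a • p.1 + b • p.2) (e i) with hh
    have hC1 : ContDiff ℝ 1 h := steinTest_contDiff f a b (e i) hf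
    have hbd : ∃ M, ∀ z, |h z| ≤ M := by
      refine ⟨M1, fun z => ?_⟩
      calc |h z| = ‖fderiv ℝ f (a • z.1 + b • z.2) (e i)‖ := (Real.norm_eq_abs _).symm
      _ ≤ ‖fderiv ℝ f (a • z.1 + b • z.2)‖ * ‖e i‖ := ContinuousLinearMap.le_opNorm _ _
      _ ≤ M1 * 1 := mul_le_mul (hM1 _) (henorm i) (norm_nonneg _) hM1'
      _ = M1 := mul_one _
    have hbd' : ∃ M, ∀ z, ‖fderiv ℝ h z‖ ≤ M :=
      ⟨M2 * ‖e i‖ * (|a| + |b|), fun z => steinTest_fderiv_norm_le f a b (e i) hf M2 hM2 z⟩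
    obtain ⟨eqF, eqG⟩ := hstein3 h hC1 hbd hbd' i
    have hZeq : ∀ ω, (a • F ω + b • G ω) = Z t ω := fun ω => rfl
    constructor
    · rw [show (fun ω => fderiv ℝ f (Z t ω) (e i) * F ω i)
          = fun ω => h (F ω, G ω) * F ω i from rfl, eqF, Finset.mul_sum]
      refine Finset.sum_congr rfl (fun j _ => ?_)
      rw [← integral_const_mul]
      refine integral_congr_ae (ae_of_all _ fun ω => ?_)
      have := steinTest_fderiv_fst f a b i j hf (F ω, G ω)
      simp only [hh]
      rw [this]
      rw [hZeq ω]
      ring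
    · rw [show (fun ω => fderiv ℝ f (Z t ω) (e i) * G ω i)
          = fun ω => h (F ω, G ω) * G ω i from rfl, eqG, Finset.mul_sum]
      refine Finset.sum_congr rfl (fun j _ => ?_)
      rw [← integral_const_mul]
      refine integral_congr_ae (ae_of_all _ fun ω => ?_)
      have := steinTest_fderiv_snd f a b i j hf (F ω, G ω)
      simp only [hh]
      rw [this]
      rw [hZeq ω]
      ring
  -- second derivative terms: measurability, bounds, integrability
  have hg2cont : Continuous (fderiv ℝ (fderiv ℝ f)) :=
    (hf.fderiv_right (by norm_num) : ContDiff ℝ 1 (fderiv ℝ f)).continuous_fderiv one_ne_zero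
  have hH_meas : ∀ t j i, AEStronglyMeasurable
      (fun ω => iteratedFDeriv ℝ 2 f (Z t ω) ![e j, e i]) P := by
    intro t j i
    have hcont : Continuous (fun z => fderiv ℝ (fderiv ℝ f) z (e j) (e i)) :=
      (ContinuousLinearMap.apply ℝ ℝ (e i)).continuous.comp
        ((ContinuousLinearMap.apply ℝ ((Fin d → ℝ) →L[ℝ] ℝ) (e j)).continuous.comp hg2cont)
    have heq : (fun ω => iteratedFDeriv ℝ 2 f (Z t ω) ![e j, e i])
        = fun ω => fderiv ℝ (fderiv ℝ f) (Z t ω) (e j) (e i) := by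
      funext ω; rw [iteratedFDeriv_two_apply]; simp
    rw [heq]
    exact (hcont.measurable.comp (hZm t)).aestronglyMeasurable
  have hH_bdd : ∀ t j i ω, ‖iteratedFDeriv ℝ 2 f (Z t ω) ![e j, e i]‖ ≤ M2 := by
    intro t j i ω
    calc ‖iteratedFDeriv ℝ 2 f (Z t ω) ![e j, e i]‖
        ≤ ‖iteratedFDeriv ℝ 2 f (Z t ω)‖ * ∏ k, ‖(![e j, e i] : Fin 2 → Fin d → ℝ) k‖ :=
          ContinuousMultilinearMap.le_opNorm _ _
    _ ≤ M2 * 1 := by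
        refine mul_le_mul (hM2 _) ?_ (by positivity) hM2'
        rw [Fin.prod_univ_two]
        simp only [Matrix.cons_val_zero, Matrix.cons_val_one, Matrix.head_cons]
        calc ‖e j‖ * ‖e i‖ ≤ 1 * 1 :=
              mul_le_mul (henorm j) (henorm i) (norm_nonneg _) one_pos.le
        _ = 1 := mul_one _
    _ = M2 := mul_one _
  have hHF_int : ∀ t j i,
      Integrable (fun ω => iteratedFDeriv ℝ 2 f (Z t ω) ![e j, e i] * ΓF ω j i) P :=
    fun t j i => (hΓFi j i).bdd_mul (hH_meas t j i) (ae_of_all _ fun ω => hH_bdd t j i ω)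
  have hHG_int : ∀ t j i,
      Integrable (fun ω => iteratedFDeriv ℝ 2 f (Z t ω) ![e j, e i] * ΓG ω j i) P :=
    fun t j i => (hΓGi j i).bdd_mul (hH_meas t j i) (ae_of_all _ fun ω => hH_bdd t j i ω)
  -- nonnegativity of the quadratic form
  have hQ : ∀ t, 0 ≤ ∑ i, ((∑ j, ∫ ω, iteratedFDeriv ℝ 2 f (Z t ω) ![e j, e i] * ΓF ω j i ∂P)
      - ∑ j, ∫ ω, iteratedFDeriv ℝ 2 f (Z t ω) ![e j, e i] * ΓG ω j i ∂P) := by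
    intro t
    have heq : ∑ i, ((∑ j, ∫ ω, iteratedFDeriv ℝ 2 f (Z t ω) ![e j, e i] * ΓF ω j i ∂P)
        - ∑ j, ∫ ω, iteratedFDeriv ℝ 2 f (Z t ω) ![e j, e i] * ΓG ω j i ∂P)
        = ∫ ω, ∑ i, ∑ j, (ΓF ω j i - ΓG ω j i)
            * iteratedFDeriv ℝ 2 f (Z t ω) ![e j, e i] ∂P := by
      rw [integral_finset_sum _ (fun i _ => integrable_finset_sum _ (fun j _ => by
        have := ((hHF_int t j i).sub (hHG_int t j i))
        refine this.congr (ae_of_all _ fun ω => ?_)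
        simp only [Pi.sub_apply]; ring))]
      refine Finset.sum_congr rfl (fun i _ => ?_)
      rw [integral_finset_sum _ (fun j _ => by
        have := ((hHF_int t j i).sub (hHG_int t j i))
        refine this.congr (ae_of_all _ fun ω => ?_)
        simp only [Pi.sub_apply]; ring)]
      rw [← Finset.sum_sub_distrib]
      refine Finset.sum_congr rfl (fun j _ => ?_)
      rw [← integral_sub (hHF_int t j i) (hHG_int t j i)]
      refine integral_congr_ae (ae_of_all _ fun ω => ?_)
      ring
    rw [heq]
    refine integral_nonneg_of_ae ?_
    filter_upwards [hcond] with ω hω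
    rw [Finset.sum_comm]
    exact hω (Z t ω)
  -- the derivative formula
  have hDform : ∀ t, ∫ ω, ψ t ω ∂P = Real.sin t * Real.cos t
      * ∑ i, ((∑ j, ∫ ω, iteratedFDeriv ℝ 2 f (Z t ω) ![e j, e i] * ΓF ω j i ∂P)
        - ∑ j, ∫ ω, iteratedFDeriv ℝ 2 f (Z t ω) ![e j, e i] * ΓG ω j i ∂P) := by
    intro t
    rw [hsplit t, Finset.mul_sum]
    refine Finset.sum_congr rfl (fun i _ => ?_)
    rw [(hsteinF t i).1, (hsteinF t i).2]
    ring
  have hDpos : ∀ t, t ∈ Set.Ioo 0 (Real.pi/2) → 0 ≤ ∫ ω, ψ t ω ∂P := by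
    intro t ht
    rw [hDform t]
    refine mul_nonneg (mul_nonneg ?_ ?_) (hQ t)
    · exact Real.sin_nonneg_of_nonneg_of_le_pi ht.1.le
        (le_trans ht.2.le (by linarith [Real.pi_pos]))
    · exact Real.cos_nonneg_of_mem_Icc ⟨by linarith [ht.1, Real.pi_pos], ht.2.le⟩
  -- conclude by monotonicity
  have hcontφ : Continuous (fun s => ∫ ω, f (Z s ω) ∂P) :=
    continuous_iff_continuousAt.2 (fun t => (hkey t).continuousAt)
  have hmono := monotoneOn_of_deriv_nonneg (convex_Icc 0 (Real.pi/2)) hcontφ.continuousOn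
    (fun t _ => (hkey t).differentiableAt.differentiableWithinAt)
    (fun t ht => by
      rw [interior_Icc] at ht
      rw [(hkey t).deriv]
      exact hDpos t ht)
  have hpi2 : (0:ℝ) ≤ Real.pi/2 := by linarith [Real.pi_pos]
  have hfinal := hmono (Set.left_mem_Icc.2 hpi2) (Set.right_mem_Icc.2 hpi2) hpi2
  have e0 : ∫ ω, f (Z 0 ω) ∂P = ∫ ω, f (G ω) ∂P := by
    refine integral_congr_ae (ae_of_all _ fun ω => ?_)
    simp [hZdef]
  have e1 : ∫ ω, f (Z (Real.pi/2) ω) ∂P = ∫ ω, f (F ω) ∂P := by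
    refine integral_congr_ae (ae_of_all _ fun ω => ?_)
    simp [hZdef]
  rw [ge_iff_le, ← e0, ← e1]
  exact hfinal
end

section
/- Let C be a symmetric positive semidefinite d×d real matrix with operator norm ‖C‖_op > 0, and let G be a random vector in ℝ^d whose law is the centered multivariate Gaussian measure with covariance matrix C. Then for all x_1, …, x_d ≥ 0, P[G_1 ≥ x_1, …, G_d ≥ x_d] ≤ exp(−(x_1² + … + x_d²)/(2 ‖C‖_op)). -/
open Real
open scoped NNReal ENNReal


open MeasureTheory ProbabilityTheory

/-- `μ` is the centered multivariate Gaussian measure on `ℝ^d` with covariance matrix `C`: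
it is a probability measure under which every linear functional `x ↦ ⟨θ, x⟩` has a centered
real Gaussian law with variance `θᵀ C θ`. -/
def IsCenteredGaussianWithCov {d : ℕ} (μ : Measure (Fin d → ℝ))
    (C : Matrix (Fin d) (Fin d) ℝ) : Prop :=
  IsProbabilityMeasure μ ∧
    ∀ θ : Fin d → ℝ,
      μ.map (fun x => ∑ i, θ i * x i) =
        gaussianReal 0 (Real.toNNReal (∑ i, ∑ j, θ i * C i j * θ j))

/-- The operator norm of a `d × d` real matrix acting on Euclidean space `ℝ^d`. -/
noncomputable def matrixOpNorm {d : ℕ} (C : Matrix (Fin d) (Fin d) ℝ) : ℝ :=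
  ‖LinearMap.toContinuousLinearMap (Matrix.toEuclideanLin C)‖


lemma gauss_pdf_mul_exp {v : ℝ≥0} (hv : v ≠ 0) (y : ℝ) :
    gaussianPDFReal 0 v y * rexp y = rexp (v / 2) * gaussianPDFReal v v y := by
  have hv' : (v : ℝ) ≠ 0 := by exact_mod_cast hv
  simp only [gaussianPDFReal, sub_zero]
  have h : -y ^ 2 / (2 * (v:ℝ)) + y = (v:ℝ) / 2 + -(y - (v:ℝ)) ^ 2 / (2 * v) := by
    field_simp
    ring
  rw [mul_assoc, ← Real.exp_add, h, Real.exp_add]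
  ring

lemma integrable_exp_gauss (v : ℝ≥0) : Integrable rexp (gaussianReal 0 v) := by
  by_cases hv : v = 0
  · rw [hv, gaussianReal_zero_var]
    exact (integrable_const (rexp 0)).congr (ae_eq_dirac rexp).symm
  · rw [gaussianReal_of_var_ne_zero _ hv]
    have hpdf : gaussianPDF 0 v = fun y => ((gaussianPDFReal 0 v y).toNNReal : ℝ≥0∞) := rfl
    rw [hpdf, integrable_withDensity_iff_integrable_smul₀
      ((measurable_gaussianPDFReal 0 v).real_toNNReal.aemeasurable)]
    have : (fun y => (gaussianPDFReal 0 v y).toNNReal • rexp y)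
        = fun y => rexp (v / 2) * gaussianPDFReal v v y := by
      ext y
      rw [NNReal.smul_def, smul_eq_mul, Real.coe_toNNReal _ (gaussianPDFReal_nonneg _ _ _),
        gauss_pdf_mul_exp hv]
    rw [this]
    exact (integrable_gaussianPDFReal v v).const_mul _

lemma integral_exp_gauss (v : ℝ≥0) : ∫ y, rexp y ∂(gaussianReal 0 v) = rexp (v / 2) := by
  by_cases hv : v = 0
  · simp [hv, gaussianReal_zero_var]
  · rw [gaussianReal_of_var_ne_zero _ hv]
    have hpdf : gaussianPDF 0 v = fun y => ((gaussianPDFReal 0 v y).toNNReal : ℝ≥0∞) := rfl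
    rw [hpdf, integral_withDensity_eq_integral_smul₀
      ((measurable_gaussianPDFReal 0 v).real_toNNReal.aemeasurable)]
    have : (fun y => (gaussianPDFReal 0 v y).toNNReal • rexp y)
        = fun y => rexp (v / 2) * gaussianPDFReal v v y := by
      ext y
      rw [NNReal.smul_def, smul_eq_mul, Real.coe_toNNReal _ (gaussianPDFReal_nonneg _ _ _),
        gauss_pdf_mul_exp hv]
    rw [this, integral_const_mul, integral_gaussianPDFReal_eq_one _ hv, mul_one]

lemma quad_le {d : ℕ} (C : Matrix (Fin d) (Fin d) ℝ) (θ : Fin d → ℝ) :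
    ∑ i, ∑ j, θ i * C i j * θ j ≤ matrixOpNorm C * ∑ i, θ i ^ 2 := by
  set L := LinearMap.toContinuousLinearMap (Matrix.toEuclideanLin C) with hL
  set u : EuclideanSpace ℝ (Fin d) := (WithLp.equiv 2 (Fin d → ℝ)).symm θ with hu
  have hui : ∀ i, u i = θ i := fun i => rfl
  have hLu : ∀ i, L u i = ∑ j, C i j * θ j := by
    intro i
    show Matrix.toEuclideanLin C u i = _
    rw [Matrix.toEuclideanLin_apply]
    rfl
  have h1 : ∑ i, ∑ j, θ i * C i j * θ j = (inner ℝ u (L u) : ℝ) := by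
    rw [PiLp.inner_apply]
    refine Finset.sum_congr rfl fun i _ => ?_
    rw [RCLike.inner_apply, starRingEnd_apply, star_trivial, hui, hLu, Finset.sum_mul]
    exact Finset.sum_congr rfl fun j _ => by ring
  have h2 : (inner ℝ u (L u) : ℝ) ≤ ‖u‖ * (‖L‖ * ‖u‖) :=
    (real_inner_le_norm u (L u)).trans (by gcongr; exact L.le_opNorm u)
  have h3 : ‖u‖ * ‖u‖ = ∑ i, θ i ^ 2 := by
    rw [← real_inner_self_eq_norm_mul_norm, PiLp.inner_apply]
    exact Finset.sum_congr rfl fun i _ => by rw [RCLike.inner_apply, starRingEnd_apply,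
      star_trivial, hui, sq]
  calc ∑ i, ∑ j, θ i * C i j * θ j = (inner ℝ u (L u) : ℝ) := h1
    _ ≤ ‖u‖ * (‖L‖ * ‖u‖) := h2
    _ = ‖L‖ * (‖u‖ * ‖u‖) := by ring
    _ = matrixOpNorm C * ∑ i, θ i ^ 2 := by rw [h3, matrixOpNorm]


/-- The Gaussian instance of Corollary 3.4 (Cop-thm): if `G` is a centered Gaussian vector
in `ℝ^d` with covariance matrix `C`, `C` symmetric positive semidefinite with `‖C‖_op > 0`,
then for all `x₁, …, x_d ≥ 0`,
`P[G₁ ≥ x₁, …, G_d ≥ x_d] ≤ exp(-(x₁² + ⋯ + x_d²)/(2‖C‖_op))`. -/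
theorem cop_gaussian {Ω : Type*} [MeasurableSpace Ω] (P : Measure Ω) [IsProbabilityMeasure P]
    (d : ℕ) (G : Ω → Fin d → ℝ) (hGm : Measurable G)
    (C : Matrix (Fin d) (Fin d) ℝ) (hC : C.PosSemidef) (hCop : 0 < matrixOpNorm C)
    (hGlaw : IsCenteredGaussianWithCov (P.map G) C)
    (x : Fin d → ℝ) (hx : ∀ i, 0 ≤ x i) :
    (P {ω | ∀ i, x i ≤ G ω i}).toReal
      ≤ Real.exp (-(∑ i, x i ^ 2) / (2 * matrixOpNorm C)) := by
  set N := matrixOpNorm C with hN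
  have hN0 : N ≠ 0 := ne_of_gt hCop
  set S := ∑ i, x i ^ 2 with hS
  have hS0 : 0 ≤ S := Finset.sum_nonneg fun i _ => sq_nonneg _
  set θ : Fin d → ℝ := fun i => x i / N with hθ
  have hθ0 : ∀ i, 0 ≤ θ i := fun i => div_nonneg (hx i) hCop.le
  set v : ℝ := ∑ i, ∑ j, θ i * C i j * θ j with hv
  set v' : ℝ≥0 := Real.toNNReal v with hv'
  -- variance bound
  have hθsq : ∑ i, θ i ^ 2 = S / N ^ 2 := by
    rw [hS, Finset.sum_div]
    exact Finset.sum_congr rfl fun i _ => by rw [hθ, div_pow]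
  have hvle : v ≤ S / N := by
    calc v ≤ N * ∑ i, θ i ^ 2 := quad_le C θ
      _ = N * (S / N ^ 2) := by rw [hθsq]
      _ = S / N := by field_simp
  have hv'le : (v' : ℝ) ≤ S / N := by
    rw [hv', Real.coe_toNNReal']
    exact max_le hvle (div_nonneg hS0 hCop.le)
  -- the linear functional
  set f : (Fin d → ℝ) → ℝ := fun y => ∑ i, θ i * y i with hf
  have hfm : Measurable f :=
    Finset.measurable_sum Finset.univ fun i _ => by fun_prop
  set Y : Ω → ℝ := fun ω => f (G ω) with hY
  have hYm : Measurable Y := hfm.comp hGm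
  have hmapY : P.map Y = gaussianReal 0 v' := by
    have h2 := hGlaw.2 θ
    rw [Measure.map_map hfm hGm] at h2
    exact h2
  have hexp_m : AEStronglyMeasurable rexp (P.map Y) :=
    Real.continuous_exp.stronglyMeasurable.aestronglyMeasurable
  have h_int : Integrable (fun ω => rexp (1 * Y ω)) P := by
    simp only [one_mul]
    exact (integrable_map_measure hexp_m hYm.aemeasurable).mp
      (by rw [hmapY]; exact integrable_exp_gauss v')
  have hmgf : mgf Y P 1 = rexp ((v' : ℝ) / 2) := by
    rw [mgf]
    simp only [one_mul]
    rw [← integral_map hYm.aemeasurable hexp_m, hmapY, integral_exp_gauss]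
  set a : ℝ := ∑ i, θ i * x i with ha
  have haS : a = S / N := by
    rw [ha, hS, Finset.sum_div]
    refine Finset.sum_congr rfl fun i _ => ?_
    rw [hθ, sq]
    ring
  have hsub : {ω | ∀ i, x i ≤ G ω i} ⊆ {ω | a ≤ Y ω} := by
    intro ω hω
    exact Finset.sum_le_sum fun i _ => mul_le_mul_of_nonneg_left (hω i) (hθ0 i)
  have hch := measure_ge_le_exp_mul_mgf (μ := P) (X := Y) a zero_le_one h_int
  calc (P {ω | ∀ i, x i ≤ G ω i}).toReal
      ≤ (P {ω | a ≤ Y ω}).toReal :=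
        ENNReal.toReal_mono (measure_ne_top P _) (measure_mono hsub)
    _ ≤ rexp (-1 * a) * mgf Y P 1 := hch
    _ = rexp (-a + (v' : ℝ) / 2) := by rw [hmgf, ← Real.exp_add, neg_one_mul]
    _ ≤ rexp (-S / (2 * N)) := by
        apply Real.exp_le_exp.mpr
        have h1 : -S / (2 * N) = -(S / N) + (S / N) / 2 := by field_simp; ring
        rw [haS, h1]
        linarith
end

section
/- Let p ≥ 2 be a real number, F : Ω → ℝ a centered random variable with E[|F|^p] < ∞, and Γ : Ω → ℝ a random variable with E[|Γ|^{p/2}] < ∞ and E[|F|^{p−2}|Γ|] < ∞. Assume the integration-by-parts identity E[|F|^p] = (p−1) E[|F|^{p−2} Γ] holds (with the convention |F|^0 = 1 when p = 2). Then E[|F|^p] ≤ (p−1)^{p/2} E[|Γ|^{p/2}]. -/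
open MeasureTheory ProbabilityTheory

/-- Lemma 4.3 (PoincareLem), a Poincaré-type inequality relative to the operator `Γ`:
if `F` is centered with `E[|F|^p] < ∞`, `Γ` satisfies the stated integrabilities, and the
integration-by-parts identity `E[|F|^p] = (p-1) E[|F|^{p-2} Γ]` holds, then
`E[|F|^p] ≤ (p-1)^{p/2} E[|Γ|^{p/2}]`. (Here `^` is the real power, so that the convention
`|F|⁰ = 1` for `p = 2` holds automatically.) -/
theorem poincare_lem {Ω : Type*} [MeasurableSpace Ω] (P : Measure Ω) [IsProbabilityMeasure P]
    (p : ℝ) (hp : 2 ≤ p) (F : Ω → ℝ)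
    (hFi : Integrable F P) (hFc : ∫ ω, F ω ∂P = 0)
    (hFp : Integrable (fun ω => |F ω| ^ p) P)
    (Γ : Ω → ℝ)
    (hΓp : Integrable (fun ω => |Γ ω| ^ (p / 2)) P)
    (hFΓ : Integrable (fun ω => |F ω| ^ (p - 2) * |Γ ω|) P)
    (hibp : ∫ ω, |F ω| ^ p ∂P = (p - 1) * ∫ ω, |F ω| ^ (p - 2) * Γ ω ∂P) :
    ∫ ω, |F ω| ^ p ∂P ≤ (p - 1) ^ (p / 2) * ∫ ω, |Γ ω| ^ (p / 2) ∂P := by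
  have hppos : (0:ℝ) < p := by linarith
  set A := ∫ ω, |F ω| ^ p ∂P with hAdef
  set B := ∫ ω, |Γ ω| ^ (p / 2) ∂P with hBdef
  have hB : 0 ≤ B := integral_nonneg fun ω => Real.rpow_nonneg (abs_nonneg _) _
  have hA : 0 ≤ A := integral_nonneg fun ω => Real.rpow_nonneg (abs_nonneg _) _
  have hp1 : (0:ℝ) < p - 1 := by linarith
  have hRHS : 0 ≤ (p - 1) ^ (p / 2) * B :=
    mul_nonneg (Real.rpow_nonneg hp1.le _) hB
  -- if the integrand in the ibp identity is not integrable, its integral is 0 and we are done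
  by_cases hint : Integrable (fun ω => |F ω| ^ (p - 2) * Γ ω) P
  swap
  · rw [hibp, integral_undef hint, mul_zero]; exact hRHS
  -- the key step: E[|F|^{p-2} Γ] ≤ E[|F|^{p-2} |Γ|]
  have hmono : ∫ ω, |F ω| ^ (p - 2) * Γ ω ∂P ≤ ∫ ω, |F ω| ^ (p - 2) * |Γ ω| ∂P := by
    refine integral_mono hint hFΓ fun ω => ?_
    exact mul_le_mul_of_nonneg_left (le_abs_self _) (Real.rpow_nonneg (abs_nonneg _) _)
  rcases eq_or_lt_of_le hp with hp2 | hp2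
  · -- case p = 2
    have h0 : ∀ ω, |F ω| ^ (p - 2) = 1 := fun ω => by rw [← hp2]; simp
    have hB1 : B = ∫ ω, |Γ ω| ∂P := by
      rw [hBdef]; congr 1; funext ω; rw [← hp2]; norm_num
    have hle : A ≤ (p - 1) * ∫ ω, |Γ ω| ∂P := by
      rw [hibp]
      refine mul_le_mul_of_nonneg_left ?_ hp1.le
      calc ∫ ω, |F ω| ^ (p - 2) * Γ ω ∂P ≤ ∫ ω, |F ω| ^ (p - 2) * |Γ ω| ∂P := hmono
        _ = ∫ ω, |Γ ω| ∂P := by congr 1; funext ω; rw [h0, one_mul]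
    calc A ≤ (p - 1) * ∫ ω, |Γ ω| ∂P := hle
      _ = (p - 1) ^ (p / 2) * B := by rw [← hp2, hB1]; norm_num
  · -- case p > 2
    have hps : (0:ℝ) < p - 2 := by linarith
    -- Hölder with conjugate exponents r = p/(p-2), s = p/2
    set r := p / (p - 2) with hrdef
    set s := p / 2 with hsdef
    have hrs : r.HolderConjugate s := by
      constructor
      · show r⁻¹ + s⁻¹ = 1⁻¹
        rw [inv_one, hrdef, hsdef, inv_div, inv_div, ← add_div,
          show p - 2 + 2 = p by ring, div_self hppos.ne']
      · exact div_pos hppos hps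
      · exact div_pos hppos two_pos
    have hΓabs : AEStronglyMeasurable (fun ω => |Γ ω|) P := by
      have h2 : AEMeasurable (fun ω => (|Γ ω| ^ (p / 2)) ^ (2 / p)) P :=
        hΓp.aemeasurable.pow_const (2 / p)
      have heq : (fun ω => (|Γ ω| ^ (p / 2)) ^ (2 / p)) = fun ω => |Γ ω| := by
        funext ω
        rw [← Real.rpow_mul (abs_nonneg _)]
        rw [div_mul_div_comm, mul_comm, div_self (by positivity), Real.rpow_one]
      rw [heq] at h2
      exact h2.aestronglyMeasurable
    have hFabs : AEStronglyMeasurable (fun ω => |F ω| ^ (p - 2)) P :=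
      (hFi.abs.aemeasurable.pow_const (p - 2)).aestronglyMeasurable
    -- Memℒp conditions
    have hrne : r ≠ 0 := ne_of_gt (by positivity)
    have hsne : s ≠ 0 := ne_of_gt (by positivity)
    have hfmem : MemLp (fun ω => |F ω| ^ (p - 2)) (ENNReal.ofReal r) P := by
      rw [← memLp_norm_rpow_iff (q := ENNReal.ofReal r) hFabs
        (by simp [not_le.mpr hrs.left_pos]) (by simp)]
      rw [ENNReal.div_self (by simp [not_le.mpr hrs.left_pos]) (by simp),
        memLp_one_iff_integrable]
      have heqf : (fun ω => ‖|F ω| ^ (p - 2)‖ ^ (ENNReal.ofReal r).toReal)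
          = fun ω => |F ω| ^ p := by
        funext ω
        rw [ENNReal.toReal_ofReal (by positivity), Real.norm_eq_abs,
          abs_of_nonneg (Real.rpow_nonneg (abs_nonneg _) _),
          ← Real.rpow_mul (abs_nonneg _), hrdef]
        congr 1
        field_simp
      rw [heqf]; exact hFp
    have hgmem : MemLp (fun ω => |Γ ω|) (ENNReal.ofReal s) P := by
      rw [← memLp_norm_rpow_iff (q := ENNReal.ofReal s) hΓabs
        (by simp [not_le.mpr hrs.right_pos]) (by simp)]
      rw [ENNReal.div_self (by simp [not_le.mpr hrs.right_pos]) (by simp),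
        memLp_one_iff_integrable]
      have heqg : (fun ω => ‖|Γ ω|‖ ^ (ENNReal.ofReal s).toReal)
          = fun ω => |Γ ω| ^ (p / 2) := by
        funext ω
        rw [ENNReal.toReal_ofReal (by positivity), Real.norm_eq_abs, abs_abs, hsdef]
      rw [heqg]; exact hΓp
    have hHolder : ∫ ω, |F ω| ^ (p - 2) * |Γ ω| ∂P ≤ A ^ (1 / r) * B ^ (1 / s) := by
      have hh := integral_mul_le_Lp_mul_Lq_of_nonneg hrs
        (Filter.Eventually.of_forall fun ω => Real.rpow_nonneg (abs_nonneg _) _)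
        (Filter.Eventually.of_forall fun ω => abs_nonneg (Γ ω)) hfmem hgmem
      have e1 : (fun a => (|F a| ^ (p - 2)) ^ r) = fun a => |F a| ^ p := by
        funext a
        rw [← Real.rpow_mul (abs_nonneg _), hrdef]
        congr 1; field_simp
      rw [e1, ← hAdef, ← hBdef] at hh
      exact hh
    -- combine
    have hkey : A ≤ (p - 1) * (A ^ (1 / r) * B ^ (1 / s)) := by
      calc A = (p - 1) * ∫ ω, |F ω| ^ (p - 2) * Γ ω ∂P := hibp
        _ ≤ (p - 1) * (A ^ (1 / r) * B ^ (1 / s)) :=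
            mul_le_mul_of_nonneg_left (hmono.trans hHolder) hp1.le
    rcases eq_or_lt_of_le hA with hA0 | hA0
    · rw [← hA0]; exact hRHS
    · -- divide by A^{(p-2)/p} > 0
      have h1r : 1 / r = (p - 2) / p := by rw [hrdef]; field_simp
      have h1s : 1 / s = 2 / p := by rw [hsdef, one_div, inv_div]
      have hsplit : A = A ^ ((p - 2) / p) * A ^ (2 / p) := by
        rw [← Real.rpow_add hA0, ← add_div,
          show p - 2 + 2 = p by ring, div_self hppos.ne', Real.rpow_one]
      have hApow : (0:ℝ) < A ^ ((p - 2) / p) := Real.rpow_pos_of_pos hA0 _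
      have hstep : A ^ (2 / p) ≤ (p - 1) * B ^ (2 / p) := by
        rw [← mul_le_mul_iff_right₀ hApow]
        calc A ^ ((p - 2) / p) * A ^ (2 / p) = A := hsplit.symm
          _ ≤ (p - 1) * (A ^ (1 / r) * B ^ (1 / s)) := hkey
          _ = A ^ ((p - 2) / p) * ((p - 1) * B ^ (2 / p)) := by rw [h1r, h1s]; ring
      -- raise to the power p/2
      have hfinal := Real.rpow_le_rpow (Real.rpow_nonneg hA _) hstep
        (le_of_lt (by positivity : (0:ℝ) < p / 2))
      rw [← Real.rpow_mul hA, div_mul_div_comm, mul_comm 2 p, div_self (by positivity),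
        Real.rpow_one] at hfinal
      rw [Real.mul_rpow hp1.le (Real.rpow_nonneg hB _),
        ← Real.rpow_mul hB, div_mul_div_comm, mul_comm 2 p, div_self (by positivity),
        Real.rpow_one] at hfinal
      exact hfinal
end

section
/- Let F, G : Ω → ℝ^d be integrable centered random vectors on a probability space (Ω, 𝓕, P), and let (Γ^F, Γ^G) be a joint Stein pair without cross terms for (F, G). Let f : ℝ^d → ℝ be a C² function with bounded first and second partial derivatives, and define φ(t) = E[f(√(1−t) G + √t F)] for t ∈ [0,1]. Then φ is differentiable on (0,1) and, for every t ∈ (0,1), φ′(t) = ½ Σ_{i,j=1}^d E[ (∂²f/∂x_i∂x_j)(√(1−t) G + √t F) (Γ^F_{ij} − Γ^G_{ij}) ]. -/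
open MeasureTheory ProbabilityTheory

section Aux
variable {d : ℕ}

lemma pi_single_sum (x : Fin d → ℝ) : x = ∑ i, x i • (Pi.single i 1 : Fin d → ℝ) := by
  conv_lhs => rw [pi_eq_sum_univ x]
  refine Finset.sum_congr rfl fun i _ => ?_
  congr 1
  funext j
  simp [Pi.single_apply, eq_comm]

lemma clm_apply_eq_sum (L : (Fin d → ℝ) →L[ℝ] ℝ) (x : Fin d → ℝ) :
    L x = ∑ i, x i * L (Pi.single i 1) := by
  conv_lhs => rw [pi_single_sum x]
  rw [map_sum]
  simp [smul_eq_mul]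

lemma second_deriv_bound {f : (Fin d → ℝ) → ℝ} {M : ℝ}
    (hM : ∀ x, ‖iteratedFDeriv ℝ 2 f x‖ ≤ M) (x u v : Fin d → ℝ) :
    ‖fderiv ℝ (fderiv ℝ f) x u v‖ ≤ M * ‖u‖ * ‖v‖ := by
  have h := iteratedFDeriv_two_apply (𝕜 := ℝ) f x ![u, v]
  simp only [Matrix.cons_val_zero, Matrix.cons_val_one, Matrix.head_cons] at h
  rw [← h]
  calc ‖iteratedFDeriv ℝ 2 f x ![u, v]‖
      ≤ ‖iteratedFDeriv ℝ 2 f x‖ * ∏ i, ‖![u, v] i‖ :=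
        (iteratedFDeriv ℝ 2 f x).le_opNorm _
    _ = ‖iteratedFDeriv ℝ 2 f x‖ * (‖u‖ * ‖v‖) := by
        rw [Fin.prod_univ_two]
        simp
    _ ≤ M * (‖u‖ * ‖v‖) := mul_le_mul_of_nonneg_right (hM x) (by positivity)
    _ = M * ‖u‖ * ‖v‖ := by ring

lemma second_deriv_opnorm {f : (Fin d → ℝ) → ℝ} {M : ℝ}
    (hM : ∀ x, ‖iteratedFDeriv ℝ 2 f x‖ ≤ M) (hM0 : 0 ≤ M) (x : Fin d → ℝ) :
    ‖fderiv ℝ (fderiv ℝ f) x‖ ≤ M := by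
  refine ContinuousLinearMap.opNorm_le_bound _ hM0 fun u => ?_
  refine ContinuousLinearMap.opNorm_le_bound _ (by positivity) fun v => ?_
  calc ‖fderiv ℝ (fderiv ℝ f) x u v‖ ≤ M * ‖u‖ * ‖v‖ := second_deriv_bound hM x u v
    _ = M * ‖u‖ * ‖v‖ := rfl

end Aux

set_option maxHeartbeats 2000000 in
/-- The extension of Piterbarg's smart-path identity (proof of Theorem 3.1, gs-thm): with
`φ(t) = E[f(√(1-t) G + √t F)]`, the function `φ` is differentiable on `(0,1)` with
`φ'(t) = ½ ∑ᵢⱼ E[(∂²f/∂xᵢ∂xⱼ)(√(1-t) G + √t F) (ΓFᵢⱼ - ΓGᵢⱼ)]`. -/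
theorem piterbarg_identity {Ω : Type*} [MeasurableSpace Ω] (P : Measure Ω)
    [IsProbabilityMeasure P]
    (d : ℕ) (F G : Ω → Fin d → ℝ)
    (hFm : Measurable F) (hGm : Measurable G)
    (hFi : ∀ i, Integrable (fun ω => F ω i) P)
    (hGi : ∀ i, Integrable (fun ω => G ω i) P)
    (hFc : ∀ i, ∫ ω, F ω i ∂P = 0) (hGc : ∀ i, ∫ ω, G ω i ∂P = 0)
    (ΓF ΓG : Ω → Fin d → Fin d → ℝ)
    (hstein : IsJointSteinPair P F G ΓF ΓG)
    (f : (Fin d → ℝ) → ℝ) (hf : ContDiff ℝ 2 f)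
    (hf1 : ∃ M, ∀ x, ‖fderiv ℝ f x‖ ≤ M)
    (hf2 : ∃ M, ∀ x, ‖iteratedFDeriv ℝ 2 f x‖ ≤ M) :
    ∀ t ∈ Set.Ioo (0 : ℝ) 1,
      HasDerivAt
        (fun s : ℝ =>
          ∫ ω, f (fun k => Real.sqrt (1 - s) * G ω k + Real.sqrt s * F ω k) ∂P)
        ((1 / 2) * ∑ i, ∑ j,
          ∫ ω, iteratedFDeriv ℝ 2 f
              (fun k => Real.sqrt (1 - t) * G ω k + Real.sqrt t * F ω k)
              ![Pi.single i 1, Pi.single j 1]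
            * (ΓF ω i j - ΓG ω i j) ∂P)
        t := by
  intro t ht
  obtain ⟨ht0, ht1⟩ := ht
  obtain ⟨hΓF, hΓG, hSt⟩ := hstein
  obtain ⟨M1, hM1⟩ := hf1
  obtain ⟨M2, hM2⟩ := hf2
  have hM1_0 : 0 ≤ M1 := le_trans (norm_nonneg _) (hM1 0)
  have hM2_0 : 0 ≤ M2 := le_trans (norm_nonneg _) (hM2 0)
  have hfd : Differentiable ℝ f := hf.differentiable (by norm_num)
  have hDc : ContDiff ℝ 1 (fderiv ℝ f) := hf.fderiv_right (by norm_num)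
  have hDd : Differentiable ℝ (fderiv ℝ f) := hDc.differentiable one_ne_zero
  have h1t : 0 < 1 - t := by linarith
  have hst : 0 < Real.sqrt t := Real.sqrt_pos.2 ht0
  have hs1t : 0 < Real.sqrt (1 - t) := Real.sqrt_pos.2 h1t
  -- the path, its pointwise time-derivative, and the derivative of the composition
  set Z : ℝ → Ω → Fin d → ℝ :=
    fun s ω k => Real.sqrt (1 - s) * G ω k + Real.sqrt s * F ω k with hZ
  set V : ℝ → Ω → Fin d → ℝ :=
    fun s ω => (-(1 / (2 * Real.sqrt (1 - s)))) • G ω + (1 / (2 * Real.sqrt s)) • F ω with hV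
  set Φ : ℝ → Ω → ℝ := fun s ω => fderiv ℝ f (Z s ω) (V s ω) with hΦ
  -- measurability
  have hGk : ∀ k, Measurable fun ω => G ω k := fun k => (measurable_pi_apply k).comp hGm
  have hFk : ∀ k, Measurable fun ω => F ω k := fun k => (measurable_pi_apply k).comp hFm
  have hZmeas : ∀ s, Measurable (Z s) := fun s =>
    measurable_pi_lambda _ fun k =>
      (measurable_const.mul (hGk k)).add (measurable_const.mul (hFk k))
  have hVmeas : ∀ s, Measurable (V s) := fun s =>
    measurable_pi_lambda _ fun k =>
      ((hGk k).const_smul _).add ((hFk k).const_smul _)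
  have hDk_cont : ∀ k : Fin d, Continuous fun x => fderiv ℝ f x (Pi.single k 1) := fun k =>
    (ContinuousLinearMap.apply ℝ ℝ ((Pi.single k 1 : Fin d → ℝ))).continuous.comp
      (hf.continuous_fderiv (by norm_num))
  -- integrability of norms
  have hGnorm : Integrable (fun ω => ‖G ω‖) P := by
    refine (integrable_finset_sum Finset.univ fun k _ => (hGi k).abs).mono'
      hGm.norm.aestronglyMeasurable ?_
    filter_upwards with ω
    rw [Real.norm_eq_abs, abs_norm]
    refine (pi_norm_le_iff_of_nonneg (Finset.sum_nonneg fun k _ => abs_nonneg _)).2 fun k => ?_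
    rw [Real.norm_eq_abs]
    exact Finset.single_le_sum (f := fun k => |G ω k|) (fun k _ => abs_nonneg _)
      (Finset.mem_univ k)
  have hFnorm : Integrable (fun ω => ‖F ω‖) P := by
    refine (integrable_finset_sum Finset.univ fun k _ => (hFi k).abs).mono'
      hFm.norm.aestronglyMeasurable ?_
    filter_upwards with ω
    rw [Real.norm_eq_abs, abs_norm]
    refine (pi_norm_le_iff_of_nonneg (Finset.sum_nonneg fun k _ => abs_nonneg _)).2 fun k => ?_
    rw [Real.norm_eq_abs]
    exact Finset.single_le_sum (f := fun k => |F ω k|) (fun k _ => abs_nonneg _)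
      (Finset.mem_univ k)
  -- the ball
  set ε := min (t / 2) ((1 - t) / 2) with hε
  have hεpos : 0 < ε := lt_min (by linarith) (by linarith)
  have hball : ∀ s ∈ Metric.ball t ε, t / 2 < s ∧ (1 - t) / 2 < 1 - s := by
    intro s hs
    rw [Metric.mem_ball, Real.dist_eq, abs_sub_lt_iff] at hs
    have h1 : s - t < (1 - t) / 2 := lt_of_lt_of_le hs.1 (min_le_right _ _)
    have h2 : t - s < t / 2 := lt_of_lt_of_le hs.2 (min_le_left _ _)
    constructor <;> linarith
  -- pointwise differentiability
  have h_diff : ∀ ω, ∀ s ∈ Metric.ball t ε, HasDerivAt (fun u => f (Z u ω)) (Φ s ω) s := by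
    intro ω s hs
    obtain ⟨hb1, hb2⟩ := hball s hs
    have hs0 : 0 < s := by linarith
    have hs1s : 0 < 1 - s := by linarith
    have hZd : HasDerivAt (fun u => Z u ω) (V s ω) s := by
      rw [hasDerivAt_pi]
      intro k
      have hsq : HasDerivAt Real.sqrt (1 / (2 * Real.sqrt s)) s := Real.hasDerivAt_sqrt hs0.ne'
      have h1 : HasDerivAt (fun x : ℝ => 1 - x) (-1) s := (hasDerivAt_id s).const_sub 1
      have hsq1 : HasDerivAt (fun u : ℝ => Real.sqrt (1 - u))
          (1 / (2 * Real.sqrt (1 - s)) * (-1)) s :=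
        (Real.hasDerivAt_sqrt hs1s.ne').comp s h1
      have key := (hsq1.mul_const (G ω k)).add (hsq.mul_const (F ω k))
      have hVk : V s ω k
          = 1 / (2 * Real.sqrt (1 - s)) * (-1) * G ω k + 1 / (2 * Real.sqrt s) * F ω k := by
        simp only [hV, Pi.add_apply, Pi.smul_apply, smul_eq_mul]
        ring
      rw [hVk]
      exact key
    exact (hfd (Z s ω)).hasFDerivAt.comp_hasDerivAt s hZd
  -- uniform bound on the ball
  set c1 : ℝ := 1 / (2 * Real.sqrt ((1 - t) / 2)) with hc1
  set c2 : ℝ := 1 / (2 * Real.sqrt (t / 2)) with hc2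
  have hsc1 : 0 < Real.sqrt ((1 - t) / 2) := Real.sqrt_pos.2 (by linarith)
  have hsc2 : 0 < Real.sqrt (t / 2) := Real.sqrt_pos.2 (by linarith)
  have h_bound : ∀ ω, ∀ s ∈ Metric.ball t ε,
      ‖Φ s ω‖ ≤ M1 * (c1 * ‖G ω‖ + c2 * ‖F ω‖) := by
    intro ω s hs
    obtain ⟨hb1, hb2⟩ := hball s hs
    have hs0 : 0 < s := by linarith
    have hs1s : 0 < 1 - s := by linarith
    have hss : 0 < Real.sqrt s := Real.sqrt_pos.2 hs0
    have hss1 : 0 < Real.sqrt (1 - s) := Real.sqrt_pos.2 hs1s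
    have e1 : ‖(-(1 / (2 * Real.sqrt (1 - s))))‖ ≤ c1 := by
      rw [Real.norm_eq_abs, abs_neg, abs_of_nonneg (by positivity)]
      rw [hc1]
      apply one_div_le_one_div_of_le (by positivity)
      have := Real.sqrt_le_sqrt (show (1 - t) / 2 ≤ 1 - s by linarith)
      linarith
    have e2 : ‖(1 / (2 * Real.sqrt s))‖ ≤ c2 := by
      rw [Real.norm_eq_abs, abs_of_nonneg (by positivity)]
      rw [hc2]
      apply one_div_le_one_div_of_le (by positivity)
      have := Real.sqrt_le_sqrt (show t / 2 ≤ s by linarith)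
      linarith
    have hVb : ‖V s ω‖ ≤ c1 * ‖G ω‖ + c2 * ‖F ω‖ := by
      refine le_trans (norm_add_le _ _) ?_
      rw [norm_smul, norm_smul]
      gcongr
    calc ‖Φ s ω‖ ≤ ‖fderiv ℝ f (Z s ω)‖ * ‖V s ω‖ := ContinuousLinearMap.le_opNorm _ _
      _ ≤ M1 * (c1 * ‖G ω‖ + c2 * ‖F ω‖) :=
          mul_le_mul (hM1 _) hVb (norm_nonneg _) hM1_0
  have hbound_int : Integrable (fun ω => M1 * (c1 * ‖G ω‖ + c2 * ‖F ω‖)) P :=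
    ((hGnorm.const_mul c1).add (hFnorm.const_mul c2)).const_mul M1
  -- integrability of f along the path at t
  have hlip : LipschitzWith M1.toNNReal f := by
    apply lipschitzWith_of_nnnorm_fderiv_le hfd
    intro x
    rw [← NNReal.coe_le_coe, coe_nnnorm, Real.coe_toNNReal _ hM1_0]
    exact hM1 x
  have hZt_norm : ∀ ω, ‖Z t ω‖ ≤ ‖G ω‖ + ‖F ω‖ := by
    intro ω
    have hZω : Z t ω = Real.sqrt (1 - t) • G ω + Real.sqrt t • F ω := by
      funext k
      simp only [hZ, Pi.add_apply, Pi.smul_apply, smul_eq_mul]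
    rw [hZω]
    refine le_trans (norm_add_le _ _) ?_
    rw [norm_smul, norm_smul, Real.norm_eq_abs, abs_of_nonneg (Real.sqrt_nonneg _),
      Real.norm_eq_abs, abs_of_nonneg (Real.sqrt_nonneg _)]
    have h1 : Real.sqrt (1 - t) ≤ 1 := Real.sqrt_le_one.2 (by linarith)
    have h2 : Real.sqrt t ≤ 1 := Real.sqrt_le_one.2 ht1.le
    nlinarith [norm_nonneg (G ω), norm_nonneg (F ω)]
  have hF_int : Integrable (fun ω => f (Z t ω)) P := by
    refine Integrable.mono'
      (g := fun ω => |f 0| + (M1.toNNReal : ℝ) * (‖G ω‖ + ‖F ω‖)) ?_ ?_ ?_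
    · exact (integrable_const _).add ((hGnorm.add hFnorm).const_mul _)
    · exact (hf.continuous.measurable.comp (hZmeas t)).aestronglyMeasurable
    · filter_upwards with ω
      have hd := hlip.dist_le_mul (Z t ω) 0
      rw [Real.dist_eq, dist_zero_right] at hd
      have : ‖Z t ω‖ ≤ ‖G ω‖ + ‖F ω‖ := hZt_norm ω
      have hM1n : 0 ≤ (M1.toNNReal : ℝ) := NNReal.coe_nonneg _
      rw [Real.norm_eq_abs]
      calc |f (Z t ω)| ≤ |f (Z t ω) - f 0| + |f 0| := by
            have := abs_add_le (f (Z t ω) - f 0) (f 0); simpa using this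
        _ ≤ (M1.toNNReal : ℝ) * ‖Z t ω‖ + |f 0| := by
            exact add_le_add_left hd _
        _ ≤ |f 0| + (M1.toNNReal : ℝ) * (‖G ω‖ + ‖F ω‖) := by
            have := mul_le_mul_of_nonneg_left (hZt_norm ω) hM1n
            linarith
  -- measurability of Φ t
  have hVk_meas : ∀ s k, Measurable fun ω => V s ω k := fun s k =>
    (measurable_pi_apply k).comp (hVmeas s)
  have hΦt_meas : AEStronglyMeasurable (Φ t) P := by
    have hrw : Φ t = fun ω => ∑ k, V t ω k * fderiv ℝ f (Z t ω) (Pi.single k 1) := by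
      funext ω
      exact clm_apply_eq_sum _ _
    rw [hrw]
    refine (Finset.measurable_sum Finset.univ fun k _ => ?_).aestronglyMeasurable
    exact (hVk_meas t k).mul ((hDk_cont k).measurable.comp (hZmeas t))
  -- differentiation under the integral
  obtain ⟨-, hder⟩ := hasDerivAt_integral_of_dominated_loc_of_deriv_le (Metric.ball_mem_nhds t hεpos)
    (Filter.Eventually.of_forall fun s =>
      (hf.continuous.measurable.comp (hZmeas s)).aestronglyMeasurable)
    hF_int hΦt_meas
    (Filter.Eventually.of_forall fun ω s hs => h_bound ω s hs)
    hbound_int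
    (Filter.Eventually.of_forall fun ω s hs => h_diff ω s hs)
  -- now identify the value of the derivative
  -- the continuous linear map p ↦ √t p.1 + √(1-t) p.2
  set A : ((Fin d → ℝ) × (Fin d → ℝ)) →L[ℝ] (Fin d → ℝ) :=
    Real.sqrt t • (ContinuousLinearMap.fst ℝ _ _) +
      Real.sqrt (1 - t) • (ContinuousLinearMap.snd ℝ _ _) with hA
  have hA_apply : ∀ p : (Fin d → ℝ) × (Fin d → ℝ),
      A p = Real.sqrt t • p.1 + Real.sqrt (1 - t) • p.2 := fun p => rfl
  have hAZ : ∀ ω, A (F ω, G ω) = Z t ω := by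
    intro ω
    rw [hA_apply]
    funext k
    simp only [hZ, Pi.add_apply, Pi.smul_apply, smul_eq_mul]
    ring
  -- Stein test function family
  set H : Fin d → ((Fin d → ℝ) × (Fin d → ℝ)) → ℝ :=
    fun k p => fderiv ℝ f (A p) (Pi.single k 1) with hH
  have hH_cd : ∀ k, ContDiff ℝ 1 (H k) := fun k =>
    (ContinuousLinearMap.apply ℝ ℝ ((Pi.single k 1 : Fin d → ℝ))).contDiff.comp
      (hDc.comp A.contDiff)
  have hH_fderiv : ∀ k p, HasFDerivAt (H k)
      ((ContinuousLinearMap.apply ℝ ℝ ((Pi.single k 1 : Fin d → ℝ))).comp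
        ((fderiv ℝ (fderiv ℝ f) (A p)).comp A)) p := fun k p =>
    ((ContinuousLinearMap.apply ℝ ℝ ((Pi.single k 1 : Fin d → ℝ))).hasFDerivAt).comp p
      (((hDd (A p)).hasFDerivAt).comp p A.hasFDerivAt)
  have hH_fderiv_eq : ∀ k p, fderiv ℝ (H k) p
      = (ContinuousLinearMap.apply ℝ ℝ ((Pi.single k 1 : Fin d → ℝ))).comp
        ((fderiv ℝ (fderiv ℝ f) (A p)).comp A) := fun k p => (hH_fderiv k p).fderiv
  have hH_bdd : ∀ k, ∃ M, ∀ p, |H k p| ≤ M := fun k =>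
    ⟨M1 * ‖(Pi.single k 1 : Fin d → ℝ)‖, fun p => by
      rw [← Real.norm_eq_abs]
      exact le_trans (ContinuousLinearMap.le_opNorm _ _)
        (mul_le_mul_of_nonneg_right (hM1 _) (norm_nonneg _))⟩
  have hHd_bdd : ∀ k, ∃ M, ∀ p, ‖fderiv ℝ (H k) p‖ ≤ M := fun k =>
    ⟨‖ContinuousLinearMap.apply ℝ ℝ ((Pi.single k 1 : Fin d → ℝ))‖ * (M2 * ‖A‖), fun p => by
      rw [hH_fderiv_eq]
      calc ‖(ContinuousLinearMap.apply ℝ ℝ ((Pi.single k 1 : Fin d → ℝ))).comp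
            ((fderiv ℝ (fderiv ℝ f) (A p)).comp A)‖
          ≤ ‖ContinuousLinearMap.apply ℝ ℝ ((Pi.single k 1 : Fin d → ℝ))‖ *
              ‖(fderiv ℝ (fderiv ℝ f) (A p)).comp A‖ :=
            ContinuousLinearMap.opNorm_comp_le _ _
        _ ≤ ‖ContinuousLinearMap.apply ℝ ℝ ((Pi.single k 1 : Fin d → ℝ))‖ *
              (‖fderiv ℝ (fderiv ℝ f) (A p)‖ * ‖A‖) :=
            mul_le_mul_of_nonneg_left (ContinuousLinearMap.opNorm_comp_le _ _)
              (norm_nonneg (ContinuousLinearMap.apply ℝ ℝ ((Pi.single k 1 : Fin d → ℝ))))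
        _ ≤ ‖ContinuousLinearMap.apply ℝ ℝ ((Pi.single k 1 : Fin d → ℝ))‖ * (M2 * ‖A‖) :=
            mul_le_mul_of_nonneg_left
              (mul_le_mul_of_nonneg_right (second_deriv_opnorm hM2 hM2_0 _) (norm_nonneg _))
              (norm_nonneg (ContinuousLinearMap.apply ℝ ℝ ((Pi.single k 1 : Fin d → ℝ))))⟩
  have hStein := fun k => hSt (H k) (hH_cd k) (hH_bdd k) (hHd_bdd k) k
  -- values of the derivative of H
  have hFapp : ∀ k j ω,
      fderiv ℝ (H k) (F ω, G ω) ((Pi.single j 1 : Fin d → ℝ), (0 : Fin d → ℝ))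
        = Real.sqrt t * fderiv ℝ (fderiv ℝ f) (Z t ω) (Pi.single j 1) (Pi.single k 1) := by
    intro k j ω
    have hAu : A ((Pi.single j 1 : Fin d → ℝ), (0 : Fin d → ℝ))
        = Real.sqrt t • (Pi.single j 1 : Fin d → ℝ) := by
      rw [hA_apply]
      simp
    rw [hH_fderiv_eq]
    simp only [ContinuousLinearMap.coe_comp', Function.comp_apply,
      ContinuousLinearMap.apply_apply]
    rw [hAu, _root_.map_smul, ContinuousLinearMap.smul_apply, smul_eq_mul, hAZ]
  have hGapp : ∀ k j ω,
      fderiv ℝ (H k) (F ω, G ω) ((0 : Fin d → ℝ), (Pi.single j 1 : Fin d → ℝ))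
        = Real.sqrt (1 - t) * fderiv ℝ (fderiv ℝ f) (Z t ω) (Pi.single j 1) (Pi.single k 1) := by
    intro k j ω
    have hAu : A ((0 : Fin d → ℝ), (Pi.single j 1 : Fin d → ℝ))
        = Real.sqrt (1 - t) • (Pi.single j 1 : Fin d → ℝ) := by
      rw [hA_apply]
      simp
    rw [hH_fderiv_eq]
    simp only [ContinuousLinearMap.coe_comp', Function.comp_apply,
      ContinuousLinearMap.apply_apply]
    rw [hAu, _root_.map_smul, ContinuousLinearMap.smul_apply, smul_eq_mul, hAZ]
  -- the second-derivative kernel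
  set B : Ω → Fin d → Fin d → ℝ :=
    fun ω j k => fderiv ℝ (fderiv ℝ f) (Z t ω) (Pi.single j 1) (Pi.single k 1) with hB
  have hB_meas : ∀ j k, Measurable fun ω => B ω j k := by
    intro j k
    have hcont : Continuous fun x =>
        fderiv ℝ (fderiv ℝ f) x (Pi.single j 1) (Pi.single k 1) :=
      (ContinuousLinearMap.apply ℝ ℝ ((Pi.single k 1 : Fin d → ℝ))).continuous.comp
        ((ContinuousLinearMap.apply ℝ ((Fin d → ℝ) →L[ℝ] ℝ)
          ((Pi.single j 1 : Fin d → ℝ))).continuous.comp (hDc.continuous_fderiv one_ne_zero))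
    exact hcont.measurable.comp (hZmeas t)
  have hB_bdd : ∀ j k ω, ‖B ω j k‖
      ≤ M2 * ‖(Pi.single j 1 : Fin d → ℝ)‖ * ‖(Pi.single k 1 : Fin d → ℝ)‖ := fun j k ω =>
    second_deriv_bound hM2 _ _ _
  have hBF_int : ∀ j k, Integrable (fun ω => B ω j k * ΓF ω j k) P := fun j k =>
    (hΓF j k).bdd_mul (hB_meas j k).aestronglyMeasurable (Filter.Eventually.of_forall fun ω => hB_bdd j k ω)
  have hBG_int : ∀ j k, Integrable (fun ω => B ω j k * ΓG ω j k) P := fun j k =>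
    (hΓG j k).bdd_mul (hB_meas j k).aestronglyMeasurable (Filter.Eventually.of_forall fun ω => hB_bdd j k ω)
  -- Stein identities in kernel form
  have hsteinF : ∀ k, ∫ ω, H k (F ω, G ω) * F ω k ∂P
      = Real.sqrt t * ∑ j, ∫ ω, B ω j k * ΓF ω j k ∂P := by
    intro k
    rw [(hStein k).1, Finset.mul_sum]
    refine Finset.sum_congr rfl fun j _ => ?_
    have e : (fun ω => fderiv ℝ (H k) (F ω, G ω) (Pi.single j 1, 0) * ΓF ω j k)
        = fun ω => Real.sqrt t * (B ω j k * ΓF ω j k) := by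
      funext ω
      rw [hFapp]
      ring
    rw [e, integral_const_mul]
  have hsteinG : ∀ k, ∫ ω, H k (F ω, G ω) * G ω k ∂P
      = Real.sqrt (1 - t) * ∑ j, ∫ ω, B ω j k * ΓG ω j k ∂P := by
    intro k
    rw [(hStein k).2, Finset.mul_sum]
    refine Finset.sum_congr rfl fun j _ => ?_
    have e : (fun ω => fderiv ℝ (H k) (F ω, G ω) (0, Pi.single j 1) * ΓG ω j k)
        = fun ω => Real.sqrt (1 - t) * (B ω j k * ΓG ω j k) := by
      funext ω
      rw [hGapp]
      ring
    rw [e, integral_const_mul]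
  -- H along the random vectors
  have hHFG : ∀ k ω, H k (F ω, G ω) = fderiv ℝ f (Z t ω) (Pi.single k 1) := by
    intro k ω
    rw [hH]
    simp only
    rw [hAZ]
  have hH_meas : ∀ k, AEStronglyMeasurable (fun ω => H k (F ω, G ω)) P := by
    intro k
    have e : (fun ω => H k (F ω, G ω)) = fun ω => fderiv ℝ f (Z t ω) (Pi.single k 1) :=
      funext fun ω => hHFG k ω
    rw [e]
    exact ((hDk_cont k).measurable.comp (hZmeas t)).aestronglyMeasurable
  have hH_bdd' : ∀ k, ∃ C, ∀ ω, ‖H k (F ω, G ω)‖ ≤ C := by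
    intro k
    obtain ⟨M, hM⟩ := hH_bdd k
    exact ⟨M, fun ω => by rw [Real.norm_eq_abs]; exact hM _⟩
  have hHG_int : ∀ k, Integrable (fun ω => H k (F ω, G ω) * G ω k) P := fun k =>
    (hGi k).bdd_mul (hH_meas k) (Filter.Eventually.of_forall (hH_bdd' k).choose_spec)
  have hHF_int : ∀ k, Integrable (fun ω => H k (F ω, G ω) * F ω k) P := fun k =>
    (hFi k).bdd_mul (hH_meas k) (Filter.Eventually.of_forall (hH_bdd' k).choose_spec)
  -- decompose Φ t and integrate
  have hterm_int : ∀ k, Integrable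
      (fun ω => (-(1 / (2 * Real.sqrt (1 - t)))) * (H k (F ω, G ω) * G ω k)
        + (1 / (2 * Real.sqrt t)) * (H k (F ω, G ω) * F ω k)) P := fun k =>
    ((hHG_int k).const_mul _).add ((hHF_int k).const_mul _)
  have step1 : ∫ ω, Φ t ω ∂P = ∑ k,
      ((-(1 / (2 * Real.sqrt (1 - t)))) * ∫ ω, H k (F ω, G ω) * G ω k ∂P
        + (1 / (2 * Real.sqrt t)) * ∫ ω, H k (F ω, G ω) * F ω k ∂P) := by
    have e : (fun ω => Φ t ω) = fun ω => ∑ k,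
        ((-(1 / (2 * Real.sqrt (1 - t)))) * (H k (F ω, G ω) * G ω k)
          + (1 / (2 * Real.sqrt t)) * (H k (F ω, G ω) * F ω k)) := by
      funext ω
      have e1 : Φ t ω = ∑ k, V t ω k * fderiv ℝ f (Z t ω) (Pi.single k 1) :=
        clm_apply_eq_sum _ _
      rw [e1]
      refine Finset.sum_congr rfl fun k _ => ?_
      rw [hHFG k ω]
      simp only [hV, Pi.add_apply, Pi.smul_apply, smul_eq_mul]
      ring
    rw [e, integral_finset_sum _ fun k _ => hterm_int k]
    refine Finset.sum_congr rfl fun k _ => ?_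
    rw [integral_add ((hHG_int k).const_mul _) ((hHF_int k).const_mul _),
      integral_const_mul, integral_const_mul]
  -- final computation
  have hkey : ∫ ω, Φ t ω ∂P = (1 / 2) * ∑ i, ∑ j,
      ∫ ω, iteratedFDeriv ℝ 2 f (Z t ω) ![Pi.single i 1, Pi.single j 1]
        * (ΓF ω i j - ΓG ω i j) ∂P := by
    have hiter : ∀ (i j : Fin d) (ω : Ω),
        iteratedFDeriv ℝ 2 f (Z t ω) ![Pi.single i 1, Pi.single j 1] = B ω i j := by
      intro i j ω
      rw [iteratedFDeriv_two_apply (𝕜 := ℝ)]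
      simp only [Matrix.cons_val_zero, Matrix.cons_val_one, Matrix.head_cons]
      rfl
    have hgoal_term : ∀ i j,
        ∫ ω, iteratedFDeriv ℝ 2 f (Z t ω) ![Pi.single i 1, Pi.single j 1]
          * (ΓF ω i j - ΓG ω i j) ∂P
        = (∫ ω, B ω i j * ΓF ω i j ∂P) - ∫ ω, B ω i j * ΓG ω i j ∂P := by
      intro i j
      rw [← integral_sub (hBF_int i j) (hBG_int i j)]
      refine integral_congr_ae (Filter.Eventually.of_forall fun ω => ?_)
      simp only [hiter]
      ring
    rw [step1]
    have e2 : ∀ k, (-(1 / (2 * Real.sqrt (1 - t)))) * ∫ ω, H k (F ω, G ω) * G ω k ∂P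
        + (1 / (2 * Real.sqrt t)) * ∫ ω, H k (F ω, G ω) * F ω k ∂P
        = ∑ j, ((1 / 2) * ∫ ω, B ω j k * ΓF ω j k ∂P
            - (1 / 2) * ∫ ω, B ω j k * ΓG ω j k ∂P) := by
      intro k
      rw [hsteinF k, hsteinG k, Finset.sum_sub_distrib]
      rw [← Finset.mul_sum, ← Finset.mul_sum]
      have hc1' : (-(1 / (2 * Real.sqrt (1 - t)))) * Real.sqrt (1 - t) = -(1 / 2) := by
        field_simp
      have hc2' : (1 / (2 * Real.sqrt t)) * Real.sqrt t = 1 / 2 := by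
        field_simp
      rw [← mul_assoc, ← mul_assoc, hc1', hc2']
      ring
    rw [Finset.sum_congr rfl fun k _ => e2 k]
    rw [Finset.sum_comm]
    rw [Finset.mul_sum]
    refine Finset.sum_congr rfl fun i _ => ?_
    rw [Finset.mul_sum]
    refine Finset.sum_congr rfl fun j _ => ?_
    rw [hgoal_term i j]
    ring
  rw [← hkey]
  exact hder
end
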